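/- Let 𝒳 = (M, X, ⊥) be a deterministic concurrent system, α a state, and c ∈ 𝒞_α a clique such that some letter a ∈ Σ_α does not occur in c. Then for every execution x ∈ M_α whose Cartier–Foata normal form starts with the clique c, the letter a does not occur in x. -/

import Mathlib

namespace TraceDoc

/-- The elementary commutation relation on the free monoid induced by an
independence relation `I`. -/
def traceRel {S : Type*} (I : S → S → Prop) : FreeMonoid S → FreeMonoid S → Prop :=
  fun u v => ∃ a b, I a b ∧ u = FreeMonoid.of a * FreeMonoid.of b ∧
    v = FreeMonoid.of b * FreeMonoid.of a

/-- The congruence on the free monoid generated by the commutations of `I`. -/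
def traceCon {S : Type*} (I : S → S → Prop) : Con (FreeMonoid S) := conGen (traceRel I)

/-- The trace monoid `M(Σ, I)`. -/
abbrev TraceMonoid {S : Type*} (I : S → S → Prop) := (traceCon I).Quotient

/-- Canonical projection from words to traces. -/
def tproj {S : Type*} (I : S → S → Prop) : FreeMonoid S →* TraceMonoid I := (traceCon I).mk'

/-- Image of a letter in the trace monoid. -/
def temb {S : Type*} (I : S → S → Prop) (a : S) : TraceMonoid I := tproj I (FreeMonoid.of a)

/-- Any monoid hom to a commutative monoid factors through the trace congruence. -/
lemma traceCon_le_ker {S N : Type*} [CommMonoid N] (I : S → S → Prop)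
    (f : FreeMonoid S →* N) : traceCon I ≤ Con.ker f := by
  apply Con.conGen_le.2
  rintro u v ⟨a, b, _, rfl, rfl⟩
  simp [Con.ker_rel, map_mul, mul_comm]

/-- Length of a trace (well defined since commutations preserve length). -/
def tlen {S : Type*} (I : S → S → Prop) : TraceMonoid I → ℕ := fun x =>
  Multiplicative.toAdd
    (Con.lift _ (FreeMonoid.lift fun _ : S => Multiplicative.ofAdd (1 : ℕ))
      (traceCon_le_ker I _) x)

/-- Number of occurrences of the letter `a` in a trace (well defined). -/
def tcount {S : Type*} [DecidableEq S] (I : S → S → Prop) (a : S) : TraceMonoid I → ℕ := fun x =>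
  Multiplicative.toAdd
    (Con.lift _ (FreeMonoid.lift fun b : S =>
        Multiplicative.ofAdd (if b = a then (1 : ℕ) else 0))
      (traceCon_le_ker I _) x)

/-- Left divisibility in a trace monoid. -/
def tle {S : Type*} (I : S → S → Prop) (x y : TraceMonoid I) : Prop := ∃ z, y = x * z

/-- A clique: a finite set of pairwise independent letters. -/
def IsClique {S : Type*} (I : S → S → Prop) (s : Finset S) : Prop := (↑s : Set S).Pairwise I

/-- The type of cliques of the trace monoid. -/
abbrev Clique {S : Type*} (I : S → S → Prop) := {s : Finset S // IsClique I s}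

lemma temb_commute {S : Type*} {I : S → S → Prop} {a b : S} (h : I a b) :
    Commute (temb I a) (temb I b) := by
  have : (traceCon I) (FreeMonoid.of a * FreeMonoid.of b) (FreeMonoid.of b * FreeMonoid.of a) :=
    ConGen.Rel.of _ _ ⟨a, b, h, rfl, rfl⟩
  simpa [Commute, SemiconjBy, temb, tproj, ← map_mul] using (traceCon I).eq.2 this

/-- The product of a clique in the trace monoid. -/
def cprod {S : Type*} (I : S → S → Prop) (c : Clique I) : TraceMonoid I :=
  c.1.noncommProd (temb I) (fun a ha b hb hab => temb_commute (c.2 ha hb hab))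

/-- The Cartier–Foata normality relation `c → d` between cliques. -/
def NormalPair {S : Type*} (I : S → S → Prop) (c d : Clique I) : Prop :=
  ∀ b ∈ d.1, ∃ a ∈ c.1, ¬ I a b

/-- A concurrent system: a right action of the trace monoid on the states
`X` together with a sink `⊥` (modelled by `none`). -/
structure ConcurrentSystem {S : Type*} (I : S → S → Prop) (X : Type*) where
  act : Option X → TraceMonoid I → Option X
  act_one : ∀ α, act α 1 = α
  act_mul : ∀ α x y, act α (x * y) = act (act α x) y
  act_bot : ∀ x, act none x = none

/-- The set `M_α` of executions from state `α`. -/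
def ConcurrentSystem.execs {S : Type*} {I : S → S → Prop} {X : Type*}
    (C : ConcurrentSystem I X) (α : X) : Set (TraceMonoid I) :=
  {x | C.act (some α) x ≠ none}

end TraceDoc

namespace Stmt14Aux
open TraceDoc

inductive Tri | one | A | B
deriving DecidableEq

instance : Monoid Tri where
  one := .one
  mul x y := match x with | .one => y | .A => .A | .B => .B
  one_mul x := rfl
  mul_one x := by cases x <;> rfl
  mul_assoc x y z := by cases x <;> rfl

lemma Tri.one_def : (1 : Tri) = Tri.one := rfl

lemma Tri.mul_def (x y : Tri) :
    x * y = match x with | .one => y | .A => .A | .B => .B := rfl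

lemma Tri.mul_eq_one {x y : Tri} (h : x * y = 1) : x = 1 ∧ y = 1 := by
  cases x <;> cases y <;> simp_all [Tri.mul_def, Tri.one_def]

lemma Tri.mul_ne_one {x : Tri} (hx : x ≠ 1) (y : Tri) : x * y = x := by
  cases x <;> first | exact absurd rfl hx | rfl

open Classical in
/-- The letter-labelling homomorphism detecting occurrences of `a`. -/
noncomputable def phi {S : Type*} (I : S → S → Prop) (a : S) : FreeMonoid S →* Tri :=
  FreeMonoid.lift fun b => if b = a then Tri.A else if I a b then (1 : Tri) else Tri.B

lemma phi_con {S : Type*} (I : S → S → Prop) (hsym : Symmetric I) (a : S) :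
    traceCon I ≤ Con.ker (phi I a) := by
  apply Con.conGen_le.2
  rintro u v ⟨b, c, hbc, rfl, rfl⟩
  simp only [Con.ker_rel, map_mul, phi, FreeMonoid.lift_eval_of]
  split_ifs with h1 h2 h2 h3 h3 h3 h3 <;>
    first
      | rfl
      | (exfalso; subst_vars; first
          | exact h2 (hsym hbc)
          | exact h3 (hsym hbc)
          | exact h2 hbc
          | exact h3 hbc
          | exact hbc (hsym ‹_›))

/-- `phi` descended to the trace monoid. -/
noncomputable def psi {S : Type*} (I : S → S → Prop) (hsym : Symmetric I) (a : S) :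
    TraceMonoid I →* Tri :=
  Con.lift _ (phi I a) (phi_con I hsym a)

lemma psi_tproj {S : Type*} (I : S → S → Prop) (hsym : Symmetric I) (a : S)
    (w : FreeMonoid S) : psi I hsym a (tproj I w) = phi I a w := rfl

open Classical in
lemma psi_temb {S : Type*} (I : S → S → Prop) (hsym : Symmetric I) (a b : S) :
    psi I hsym a (temb I b)
      = if b = a then Tri.A else if I a b then (1 : Tri) else Tri.B := by
  rw [temb, psi_tproj, phi, FreeMonoid.lift_eval_of]

lemma psi_cprod_ne_A {S : Type*} {I : S → S → Prop} (hsym : Symmetric I) {a : S}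
    (d : Clique I) (hd : a ∉ d.1) : psi I hsym a (cprod I d) ≠ Tri.A := by
  have h : psi I hsym a (cprod I d) = Tri.one ∨ psi I hsym a (cprod I d) = Tri.B := by
    rw [cprod]; erw [Finset.map_noncommProd]
    refine Finset.noncommProd_induction _ _ _ (fun t => t = Tri.one ∨ t = Tri.B) (fun x y hx hy => ?_) (Or.inl rfl) ?_
    · rcases hx with rfl | rfl <;> rcases hy with rfl | rfl <;> simp [Tri.mul_def]
    · intro b hb
      rw [psi_temb]
      have hba : b ≠ a := fun h => hd (h ▸ hb)
      split_ifs <;> simp_all [Tri.one_def]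
  rcases h with h | h <;> simp [h]

lemma psi_cprod_eq_one {S : Type*} {I : S → S → Prop} (hsym : Symmetric I) {a : S}
    (d : Clique I) (h1 : psi I hsym a (cprod I d) = 1) :
    ∀ b ∈ d.1, psi I hsym a (temb I b) = 1 := by
  classical
  intro b hb
  have key : temb I b * (d.1.erase b).noncommProd (temb I)
      (fun x hx y hy hxy => temb_commute (d.2 (d.1.mem_of_mem_erase hx)
        (d.1.mem_of_mem_erase hy) hxy)) = cprod I d :=
    Finset.mul_noncommProd_erase d.1 hb (temb I) _
  have := congrArg (psi I hsym a) key
  rw [map_mul, h1] at this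
  exact (Tri.mul_eq_one this).1

lemma psi_chain_ne_A {S : Type*} {I : S → S → Prop} (hsym : Symmetric I) {a : S} :
    ∀ (l : List (Clique I)) (d : Clique I), List.Chain' (NormalPair I) (d :: l) →
      a ∉ d.1 → psi I hsym a (cprod I d * (l.map (cprod I)).prod) ≠ Tri.A := by
  intro l
  induction l with
  | nil =>
    intro d _ hd
    simpa using psi_cprod_ne_A hsym d hd
  | cons e l' ih =>
    intro d hchain hd hA
    rw [List.map_cons, List.prod_cons, ← mul_assoc, map_mul] at hA
    rw [map_mul] at hA
    cases hdd : psi I hsym a (cprod I d) with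
    | one =>
      rw [hdd, Tri.one_def.symm, one_mul] at hA
      -- the tail starts with `e`, and its product evaluates to A, so a ∈ e
      by_cases hae : a ∈ e.1
      · obtain ⟨b, hb, hba⟩ := hchain.rel_head a hae
        have hb1 := psi_cprod_eq_one hsym d hdd b hb
        rw [psi_temb] at hb1
        have hbne : b ≠ a := fun h => hd (h ▸ hb)
        have : ¬ I a b := fun h => hba (hsym h)
        simp [hbne, this, Tri.one_def] at hb1
      · rw [← map_mul] at hA
        exact ih e hchain.tail hae hA
    | A => exact psi_cprod_ne_A hsym d hd hdd
    | B =>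
      rw [hdd, Tri.mul_ne_one (by simp [Tri.one_def]) _] at hA
      exact Tri.noConfusion hA
    
lemma tcount_of_psi_one {S : Type*} [DecidableEq S] {I : S → S → Prop} (hsym : Symmetric I)
    {a : S} {x : TraceMonoid I} (h : psi I hsym a x = 1) : tcount I a x = 0 := by
  obtain ⟨w, rfl⟩ := Con.mk'_surjective x
  change psi I hsym a (tproj I w) = 1 at h
  rw [psi_tproj] at h
  induction w using FreeMonoid.recOn with
  | one => simp [tcount, tproj]
  | of_mul b w' ih =>
    rw [map_mul] at h
    obtain ⟨hb, hw'⟩ := Tri.mul_eq_one h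
    have hba : b ≠ a := by
      intro hba
      rw [phi, FreeMonoid.lift_eval_of] at hb
      simp [hba, Tri.one_def] at hb
    have : tproj I (FreeMonoid.of b * w') = temb I b * tproj I w' := map_mul _ _ _
    show tcount I a (tproj I (FreeMonoid.of b * w')) = 0
    rw [this]
    have hadd : ∀ u v : TraceMonoid I, tcount I a (u * v) = tcount I a u + tcount I a v := by
      intro u v
      simp [tcount, map_mul]
    rw [hadd]
    have ih' : tcount I a (tproj I w') = 0 := ih hw'
    rw [ih']
    have : tcount I a (temb I b) = 0 := by
      simp [tcount, temb, tproj, Con.lift_mk', FreeMonoid.lift_eval_of, hba]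
    simp [this]

end Stmt14Aux


open TraceDoc in
/-- In a deterministic concurrent system, if a letter `a` is enabled at `α`
but does not occur in the first clique `c` of the normal form of an execution
`x ∈ M_α`, then `a` does not occur in `x` at all. -/
theorem stmt14 {S X : Type*} [Fintype S] [DecidableEq S] [Fintype X]
    (I : S → S → Prop) (hsym : Symmetric I) (hirr : ∀ a, ¬ I a a)
    (C : ConcurrentSystem I X)
    (hdet : ∀ (α : X) (x y : TraceMonoid I), x ∈ C.execs α → y ∈ C.execs α →
      ∃ z ∈ C.execs α, tle I x z ∧ tle I y z)
    (α : X) (c : Clique I) (hcne : c.1.Nonempty) (hc : cprod I c ∈ C.execs α)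
    (a : S) (ha : temb I a ∈ C.execs α) (hac : a ∉ c.1) :
    ∀ x ∈ C.execs α, ∀ l : List (Clique I),
      (∀ d ∈ l, d.1.Nonempty) → List.Chain' (NormalPair I) (c :: l) →
      x = cprod I c * (l.map (cprod I)).prod →
      tcount I a x = 0 := by
  intro x hx l hl hchain hxeq
  by_contra hcnt
  open Stmt14Aux in
  have hA : psi I hsym a x ≠ Tri.A := by
    rw [hxeq]; exact psi_chain_ne_A hsym l c hchain hac
  have h1 : psi I hsym a x ≠ 1 := fun h => hcnt (tcount_of_psi_one hsym h)
  have hB : psi I hsym a x = Tri.B := by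
    cases h : psi I hsym a x
    · exact absurd h h1
    · exact absurd h hA
    · rfl
  obtain ⟨z, hz, ⟨z1, hz1⟩, ⟨z2, hz2⟩⟩ := hdet α (temb I a) x ha hx
  have hAz : psi I hsym a z = Tri.A := by
    rw [hz1, map_mul, psi_temb]; simp [Tri.mul_def]
  have hBz : psi I hsym a z = Tri.B := by
    rw [hz2, map_mul, hB, Tri.mul_ne_one (by simp [Tri.one_def]) _]
  rw [hAz] at hBz; exact Tri.noConfusion hBz
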